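/- Let k ≥ 2, let G = (V,E) be a finite simple graph with edge weights w : E → ℕ, let S ⊆ V carry a partial coloring c : S → [k], and suppose the subgraph of G induced on V ∖ S is a tree T, rooted at some r ∈ V ∖ S. For v ∈ V ∖ S let D(v) denote the vertex set of the subtree of T rooted at v, and for i ∈ [k] define M_v(i) as the maximum, over all full colorings assigning color i to v, agreeing with c on S, of the total weight of happy edges e such that e has at least one endpoint in D(v) and both endpoints of e lie in D(v) ∪ S. Then: (1) if v is a leaf of T, M_v(i) = ∑ w(vu) over neighbors u ∈ S of v with c(u) = i; (2) if v has children u_1, …, u_d in T, then M_v(i) = ∑_{u ∈ N(v) ∩ S, c(u)=i} w(vu) + ∑_{j=1}^{d} max( w(v u_j) + M_{u_j}(i), max_{i' ∈ [k], i' ≠ i} M_{u_j}(i') ); and (3) the maximum over all extensions of c of the total weight of happy edges of G equals W_p + max_{i ∈ [k]} M_r(i), where W_p is the total weight of edges with both endpoints in S whose endpoints share a color under c. -/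

import Mathlib

open Finset
open scoped Classical

/-- The total weight of the happy edges of an edge-weighted graph `G` under a full coloring. -/
noncomputable def happyEdgeWeight {V : Type*} [Fintype V] {k : ℕ}
    (G : SimpleGraph V) (w : Sym2 V → ℕ) (c : V → Fin k) : ℕ :=
  ∑ e ∈ G.edgeFinset.filter (fun e => ∀ x ∈ e, ∀ y ∈ e, c x = c y), w e

/-- The subgraph of `G` induced on the uncolored vertices `V ∖ S`. -/
def treeOf {V : Type*} (G : SimpleGraph V) (S : Finset V) :
    SimpleGraph ↥((↑S : Set V)ᶜ) :=
  G.induce ((↑S : Set V)ᶜ)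

/-- `D(v)`: the vertex set of the subtree rooted at `v` of the tree `T` (the subgraph induced on
`V ∖ S`) rooted at `r`, i.e. the vertices `u` of `T` with `dist r u = dist r v + dist v u`
(those whose path from the root passes through `v`), regarded as a set of vertices of `G`. -/
def subtreeSet {V : Type*} (G : SimpleGraph V) (S : Finset V)
    (r v : ↥((↑S : Set V)ᶜ)) : Set V :=
  {x : V | ∃ u : ↥((↑S : Set V)ᶜ), ↑u = x ∧
    (treeOf G S).dist r u = (treeOf G S).dist r v + (treeOf G S).dist v u}

/-- The children of `v` in the tree `T` rooted at `r`: the neighbors of `v` in `T` lying one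
step further from the root. -/
noncomputable def childrenOf {V : Type*} [Fintype V] (G : SimpleGraph V) (S : Finset V)
    (r v : ↥((↑S : Set V)ᶜ)) : Finset ↥((↑S : Set V)ᶜ) :=
  Finset.univ.filter (fun u => (treeOf G S).Adj v u ∧
    (treeOf G S).dist r u = (treeOf G S).dist r v + 1)

/-- `M_v(i)`: the maximum, over all full colorings assigning color `i` to `v` and agreeing
with the precoloring `c` on `S`, of the total weight of the happy edges having at least one
endpoint in `D(v)` and both endpoints in `D(v) ∪ S`. -/
noncomputable def Mval {V : Type*} [Fintype V] {k : ℕ} (G : SimpleGraph V) (w : Sym2 V → ℕ)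
    (S : Finset V) (c : V → Fin k) (r v : ↥((↑S : Set V)ᶜ)) (i : Fin k) : ℕ :=
  sSup {m : ℕ | ∃ c' : V → Fin k, c' ↑v = i ∧ (∀ x ∈ S, c' x = c x) ∧
    m = ∑ e ∈ G.edgeFinset.filter (fun e =>
        (∀ x ∈ e, ∀ y ∈ e, c' x = c' y) ∧
        (∃ x ∈ e, x ∈ subtreeSet G S r v) ∧
        (∀ x ∈ e, x ∈ subtreeSet G S r v ∪ (↑S : Set V))), w e}

namespace StmtAux

variable {α : Type*} {T : SimpleGraph α}

/-- `u` lies in the subtree rooted at `v` (w.r.t. root `r`). -/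
def InSub (T : SimpleGraph α) (r v u : α) : Prop :=
  T.dist r u = T.dist r v + T.dist v u

lemma inSub_self (r v : α) : InSub T r v v := by simp [InSub]

lemma inSub_root (r u : α) : InSub T r r u := by simp [InSub]

lemma inSub_trans {r x a b : α} (hc : T.Connected) (h1 : InSub T r x a) (h2 : InSub T r a b) :
    InSub T r x b := by
  unfold InSub at *
  have t1 : T.dist x b ≤ T.dist x a + T.dist a b := hc.dist_triangle
  have t2 : T.dist r b ≤ T.dist r x + T.dist x b := hc.dist_triangle
  omega

lemma adj_dist_one (h : T.Adj a b) : T.dist a b = 1 :=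
  (SimpleGraph.dist_eq_one_iff_adj).2 h

/-- In a tree, a neighbor of `a` is one step closer or one step further from `r`. -/
lemma tree_adj_dist (ht : T.IsTree) (r : α) {a b : α} (h : T.Adj a b) :
    T.dist r b = T.dist r a + 1 ∨ T.dist r a = T.dist r b + 1 := by
  have hc := ht.isConnected
  have h1 : T.dist r b ≤ T.dist r a + 1 := by
    have := hc.dist_triangle (u := r) (v := a) (w := b)
    rwa [adj_dist_one h] at this
  have h2 : T.dist r a ≤ T.dist r b + 1 := by
    have := hc.dist_triangle (u := r) (v := b) (w := a)
    rwa [adj_dist_one h.symm] at this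
  rcases Nat.lt_or_ge (T.dist r a) (T.dist r b) with hlt | hge
  · left; omega
  rcases Nat.lt_or_ge (T.dist r b) (T.dist r a) with hlt' | hge'
  · right; omega
  -- equal distances: contradiction with acyclicity
  exfalso
  have heq : T.dist r a = T.dist r b := by omega
  obtain ⟨q, hq, hql⟩ := (hc r b).exists_path_of_dist
  have hbq : a ∉ q.support := by
    intro hmem
    have hspec := q.take_spec hmem
    have hlen : (q.takeUntil a hmem).length + (q.dropUntil a hmem).length = q.length := by
      conv_rhs => rw [← hspec]
      rw [SimpleGraph.Walk.length_append]
    have d1 : T.dist r a ≤ (q.takeUntil a hmem).length := SimpleGraph.dist_le _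
    have d2 : T.dist a b ≤ (q.dropUntil a hmem).length := SimpleGraph.dist_le _
    have hab1 : T.dist a b = 1 := adj_dist_one h
    omega
  have hpath : (q.concat h.symm).IsPath := by
    rw [SimpleGraph.Walk.isPath_def, SimpleGraph.Walk.support_concat]
    rw [List.nodup_append']
    refine ⟨hq.support_nodup, List.nodup_singleton a, ?_⟩
    intro x hx hx'
    simp only [List.mem_singleton] at hx'
    subst hx'
    exact hbq hx
  obtain ⟨p0, hp0, hp0l⟩ := (hc r a).exists_path_of_dist
  obtain ⟨pp, -, huniq⟩ := ht.existsUnique_path r a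
  have e1 := huniq _ hpath
  have e2 := huniq _ hp0
  have : (q.concat h.symm).length = p0.length := by rw [e1, e2]
  rw [SimpleGraph.Walk.length_concat, hql, hp0l] at this
  omega

/-- Descend one step towards `u` in the subtree of `v`. -/
lemma inSub_step (hc : T.Connected) {r v u : α} (h : InSub T r v u) (hne : u ≠ v) :
    ∃ ch, T.Adj v ch ∧ T.dist r ch = T.dist r v + 1 ∧ InSub T r ch u := by
  have hd : T.dist v u ≠ 0 := by
    rw [SimpleGraph.dist_ne_zero_iff_ne_and_reachable]
    exact ⟨Ne.symm hne, hc v u⟩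
  obtain ⟨p, hpl⟩ := (hc v u).exists_walk_length_eq_dist
  cases p with
  | nil => simp at hpl; simp at hd
  | cons hadj q =>
    rename_i ch
    refine ⟨ch, hadj, ?_, ?_⟩
    · have hq : T.dist ch u ≤ q.length := SimpleGraph.dist_le q
      have hlen : q.length + 1 = T.dist v u := by
        simpa [SimpleGraph.Walk.length_cons] using hpl
      have t1 : T.dist v u ≤ 1 + T.dist ch u := by
        have := hc.dist_triangle (u := v) (v := ch) (w := u)
        rwa [adj_dist_one hadj] at this
      have hchu : T.dist ch u = T.dist v u - 1 := by omega
      have t2 : T.dist r ch ≤ T.dist r v + 1 := by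
        have := hc.dist_triangle (u := r) (v := v) (w := ch)
        rwa [adj_dist_one hadj] at this
      have t3 : T.dist r u ≤ T.dist r ch + T.dist ch u := hc.dist_triangle
      unfold InSub at h
      omega
    · -- InSub r ch u
      have hq : T.dist ch u ≤ q.length := SimpleGraph.dist_le q
      have hlen : q.length + 1 = T.dist v u := by
        simpa [SimpleGraph.Walk.length_cons] using hpl
      have t1 : T.dist v u ≤ 1 + T.dist ch u := by
        have := hc.dist_triangle (u := v) (v := ch) (w := u)
        rwa [adj_dist_one hadj] at this
      have hchu : T.dist ch u = T.dist v u - 1 := by omega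
      have t2 : T.dist r ch ≤ T.dist r v + 1 := by
        have := hc.dist_triangle (u := r) (v := v) (w := ch)
        rwa [adj_dist_one hadj] at this
      have t3 : T.dist r u ≤ T.dist r ch + T.dist ch u := hc.dist_triangle
      unfold InSub at *
      omega

/-- A child's subtree is contained in the parent's subtree. -/
lemma inSub_of_child (hc : T.Connected) {r v ch u : α} (hadj : T.Adj v ch)
    (hd : T.dist r ch = T.dist r v + 1) (h : InSub T r ch u) : InSub T r v u := by
  have t1 : T.dist v u ≤ 1 + T.dist ch u := by
    have := hc.dist_triangle (u := v) (v := ch) (w := u)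
    rwa [adj_dist_one hadj] at this
  have t2 : T.dist r u ≤ T.dist r v + T.dist v u := hc.dist_triangle
  unfold InSub at *
  omega

/-- A vertex is not in the subtree of its child. -/
lemma not_inSub_child_self {r v ch : α}
    (hd : T.dist r ch = T.dist r v + 1) : ¬ InSub T r ch v := by
  unfold InSub
  omega


lemma inSub_child {r v ch : α} (h1 : T.Adj v ch) (hd : T.dist r ch = T.dist r v + 1) :
    InSub T r v ch := by
  unfold InSub
  rw [adj_dist_one h1]
  exact hd

lemma child_dist_of_inSub (ht : T.IsTree) {r v b : α} (hadj : T.Adj v b)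
    (hin : InSub T r v b) : T.dist r b = T.dist r v + 1 := by
  rcases tree_adj_dist ht r hadj with h | h
  · exact h
  · unfold InSub at hin
    rw [adj_dist_one hadj] at hin
    omega

/-- Subtrees of distinct children are disjoint. -/
lemma inSub_disjoint (ht : T.IsTree) {r v ch ch' u : α}
    (h1 : T.Adj v ch) (hd1 : T.dist r ch = T.dist r v + 1)
    (h2 : T.Adj v ch') (hd2 : T.dist r ch' = T.dist r v + 1)
    (hu1 : InSub T r ch u) (hu2 : InSub T r ch' u) : ch = ch' := by
  have hc := ht.isConnected
  obtain ⟨p0, hp0, hp0l⟩ := (hc r v).exists_path_of_dist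
  obtain ⟨q1, hq1l⟩ := (hc ch u).exists_walk_length_eq_dist
  obtain ⟨q2, hq2l⟩ := (hc ch' u).exists_walk_length_eq_dist
  let P1 : T.Walk r u := p0.append (SimpleGraph.Walk.cons h1 q1)
  let P2 : T.Walk r u := p0.append (SimpleGraph.Walk.cons h2 q2)
  have hP1len : P1.length = T.dist r u := by
    simp only [P1, SimpleGraph.Walk.length_append, SimpleGraph.Walk.length_cons]
    unfold InSub at hu1
    omega
  have hP2len : P2.length = T.dist r u := by
    simp only [P2, SimpleGraph.Walk.length_append, SimpleGraph.Walk.length_cons]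
    unfold InSub at hu2
    omega
  have hP1 : P1.IsPath := P1.isPath_of_length_eq_dist hP1len
  have hP2 : P2.IsPath := P2.isPath_of_length_eq_dist hP2len
  obtain ⟨pp, -, huniq⟩ := ht.existsUnique_path r u
  have hEq : P1 = P2 := by rw [huniq _ hP1, huniq _ hP2]
  have g1 : P1.getVert (p0.length + 1) = ch := by
    rw [SimpleGraph.Walk.getVert_append]
    simp
  have g2 : P2.getVert (p0.length + 1) = ch' := by
    rw [SimpleGraph.Walk.getVert_append]
    simp
  rw [hEq, g2] at g1
  exact g1.symm


section Bridge

variable {V : Type*} [Fintype V] {k : ℕ}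

variable (G : SimpleGraph V) (S : Finset V)

lemma treeOf_adj {u u' : ↥((↑S : Set V)ᶜ)} : (treeOf G S).Adj u u' ↔ G.Adj ↑u ↑u' :=
  Iff.rfl

lemma coe_mem_subtreeSet {r v u : ↥((↑S : Set V)ᶜ)} :
    (↑u : V) ∈ subtreeSet G S r v ↔ InSub (treeOf G S) r v u := by
  constructor
  · rintro ⟨u', hu', h⟩
    have : u' = u := Subtype.ext hu'
    subst this
    exact h
  · intro h
    exact ⟨u, rfl, h⟩

lemma mem_subtreeSet_iff {r v : ↥((↑S : Set V)ᶜ)} {x : V} :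
    x ∈ subtreeSet G S r v ↔ ∃ hx : x ∈ ((↑S : Set V)ᶜ), InSub (treeOf G S) r v ⟨x, hx⟩ := by
  constructor
  · rintro ⟨u', rfl, h⟩
    exact ⟨u'.2, h⟩
  · rintro ⟨hx, h⟩
    exact ⟨⟨x, hx⟩, rfl, h⟩

lemma not_mem_S_of_mem_subtreeSet {r v : ↥((↑S : Set V)ᶜ)} {x : V}
    (h : x ∈ subtreeSet G S r v) : x ∉ S := by
  rw [mem_subtreeSet_iff] at h
  obtain ⟨hx, -⟩ := h
  simpa using hx

lemma mem_childrenOf_iff {r v ch : ↥((↑S : Set V)ᶜ)} :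
    ch ∈ childrenOf G S r v ↔ (treeOf G S).Adj v ch ∧
      (treeOf G S).dist r ch = (treeOf G S).dist r v + 1 := by
  simp [childrenOf]

end Bridge


section Machinery

variable {V : Type*} [Fintype V] {k : ℕ} (G : SimpleGraph V) (w : Sym2 V → ℕ)
  (S : Finset V)

/-- helper: a happy pair. -/
lemma happy_pair {c' : V → Fin k} {a b : V} (h : c' a = c' b) :
    ∀ x ∈ s(a, b), ∀ y ∈ s(a, b), c' x = c' y := by
  intro x hx y hy
  rw [Sym2.mem_iff] at hx hy
  rcases hx with rfl | rfl <;> rcases hy with rfl | rfl <;> simp [h]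

lemma ite_add_ite_add_ite {P A B C : Prop} [Decidable P] [Decidable A] [Decidable B]
    [Decidable C] (h : P ↔ A ∨ B ∨ C)
    (hAB : ¬(A ∧ B)) (hAC : ¬(A ∧ C)) (hBC : ¬(B ∧ C)) (m : ℕ) :
    (if P then m else 0) =
      (if A then m else 0) + (if B then m else 0) + (if C then m else 0) := by
  by_cases hA : A <;> by_cases hB : B <;> by_cases hC : C <;> simp_all

lemma sum_ite_unique {β : Type*} (s : Finset β) (Q : β → Prop) [DecidablePred Q]
    [Decidable (∃ a ∈ s, Q a)] (hu : ∀ a ∈ s, ∀ b ∈ s, Q a → Q b → a = b) (m : ℕ) :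
    (∑ a ∈ s, if Q a then m else 0) = if ∃ a ∈ s, Q a then m else 0 := by
  rw [← Finset.sum_filter]
  by_cases h : ∃ a ∈ s, Q a
  · obtain ⟨a, ha, hQ⟩ := h
    have : s.filter Q = {a} := by
      apply Finset.eq_singleton_iff_unique_mem.2
      refine ⟨Finset.mem_filter.2 ⟨ha, hQ⟩, ?_⟩
      intro b hb
      rw [Finset.mem_filter] at hb
      exact hu b hb.1 a ha hb.2 hQ
    simp only [this, Finset.sum_singleton]
    rw [if_pos ⟨a, ha, hQ⟩]
  · have : s.filter Q = ∅ := by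
      rw [Finset.filter_eq_empty_iff]
      intro a ha hQ
      exact h ⟨a, ha, hQ⟩
    simp [this, h]

/-- The objective: weight of happy edges touching `D(v)` and inside `D(v) ∪ S`. -/
noncomputable def Fsum (r v : ↥((↑S : Set V)ᶜ)) (c' : V → Fin k) : ℕ :=
  ∑ e ∈ G.edgeFinset.filter (fun e =>
      (∀ x ∈ e, ∀ y ∈ e, c' x = c' y) ∧
      (∃ x ∈ e, x ∈ subtreeSet G S r v) ∧
      (∀ x ∈ e, x ∈ subtreeSet G S r v ∪ (↑S : Set V))), w e

lemma Fsum_congr (r v : ↥((↑S : Set V)ᶜ)) {c' c'' : V → Fin k}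
    (h : ∀ x, x ∈ subtreeSet G S r v ∪ (↑S : Set V) → c' x = c'' x) :
    Fsum G w S r v c' = Fsum G w S r v c'' := by
  unfold Fsum
  apply Finset.sum_congr _ (fun _ _ => rfl)
  apply Finset.filter_congr
  intro e he
  constructor
  · rintro ⟨hh, hex, hall⟩
    refine ⟨fun x hx y hy => ?_, hex, hall⟩
    rw [← h x (hall x hx), ← h y (hall y hy)]
    exact hh x hx y hy
  · rintro ⟨hh, hex, hall⟩
    refine ⟨fun x hx y hy => ?_, hex, hall⟩
    rw [h x (hall x hx), h y (hall y hy)]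
    exact hh x hx y hy

lemma boundary_filter_eq (r v : ↥((↑S : Set V)ᶜ)) (c' : V → Fin k) :
    G.edgeFinset.filter (fun e => (∀ x ∈ e, ∀ y ∈ e, c' x = c' y) ∧ (↑v : V) ∈ e ∧
        ∃ u ∈ e, u ∈ S)
      = (Finset.univ.filter (fun u => G.Adj ↑v u ∧ u ∈ S ∧ c' u = c' ↑v)).image
          (fun u => s(↑v, u)) := by
  have hvS : (↑v : V) ∉ S := by
    have := v.2
    simp only [Set.mem_compl_iff, Finset.mem_coe] at this
    exact this
  ext e
  simp only [Finset.mem_filter, Finset.mem_image, Finset.mem_univ, true_and,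
    SimpleGraph.mem_edgeFinset]
  constructor
  · rintro ⟨he, hh, hv, u, hu, huS⟩
    have hne : u ≠ (↑v : V) := fun h => hvS (h ▸ huS)
    have heq : e = s(u, ↑v) := Sym2.eq_of_ne_mem hne hu hv (by simp) (by simp)
    subst heq
    have hadj : G.Adj u ↑v := (SimpleGraph.mem_edgeSet G).1 he
    exact ⟨u, ⟨hadj.symm, huS, hh u (by simp) ↑v (by simp)⟩, Sym2.eq_swap⟩
  · rintro ⟨u, ⟨hadj, huS, hcu⟩, rfl⟩
    exact ⟨(SimpleGraph.mem_edgeSet G).2 hadj, happy_pair hcu.symm, by simp,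
      u, by simp, huS⟩

lemma childedge_filter_eq (r v : ↥((↑S : Set V)ᶜ)) (c' : V → Fin k) :
    G.edgeFinset.filter (fun e => (∀ x ∈ e, ∀ y ∈ e, c' x = c' y) ∧ (↑v : V) ∈ e ∧
        ∃ ch ∈ childrenOf G S r v, (↑ch : V) ∈ e)
      = ((childrenOf G S r v).filter
            (fun ch : ↥((↑S : Set V)ᶜ) => c' ↑ch = c' ↑v)).image
          (fun ch : ↥((↑S : Set V)ᶜ) => s(↑v, ↑ch)) := by
  ext e
  rw [Finset.mem_filter, Finset.mem_image, SimpleGraph.mem_edgeFinset]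
  constructor
  · rintro ⟨he, hh, hv, ch, hch, hche⟩
    have hadjT : (treeOf G S).Adj v ch := ((mem_childrenOf_iff G S).1 hch).1
    have hne : (↑ch : V) ≠ (↑v : V) := by
      intro h
      exact (treeOf G S).irrefl (Subtype.ext h ▸ hadjT)
    have heq : e = s(↑ch, ↑v) := Sym2.eq_of_ne_mem hne hche hv (by simp) (by simp)
    subst heq
    exact ⟨ch, Finset.mem_filter.2 ⟨hch, hh ↑ch (by simp) ↑v (by simp)⟩, Sym2.eq_swap⟩
  · rintro ⟨ch, hmem, rfl⟩
    obtain ⟨hch, hcu⟩ := Finset.mem_filter.1 hmem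
    have hadjT : (treeOf G S).Adj v ch := ((mem_childrenOf_iff G S).1 hch).1
    exact ⟨(SimpleGraph.mem_edgeSet G).2 ((treeOf_adj G S).1 hadjT), happy_pair hcu.symm,
      by simp, ch, hch, by simp⟩

end Machinery


section Classify

variable {V : Type*} [Fintype V] {k : ℕ} (G : SimpleGraph V) (S : Finset V)

lemma coe_ne_S {v : ↥((↑S : Set V)ᶜ)} : (↑v : V) ∉ S := by
  have := v.2
  simp only [Set.mem_compl_iff, Finset.mem_coe] at this
  exact this

lemma child_mem_subtree {r v ch : ↥((↑S : Set V)ᶜ)} (h : ch ∈ childrenOf G S r v) :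
    (↑ch : V) ∈ subtreeSet G S r v := by
  obtain ⟨hadj, hd⟩ := (mem_childrenOf_iff G S).1 h
  exact (coe_mem_subtreeSet G S).2 (inSub_child hadj hd)

lemma subtree_mono {r v ch : ↥((↑S : Set V)ᶜ)} (hc : (treeOf G S).Connected)
    (h : ch ∈ childrenOf G S r v) {x : V} (hx : x ∈ subtreeSet G S r ch) :
    x ∈ subtreeSet G S r v := by
  obtain ⟨hadj, hd⟩ := (mem_childrenOf_iff G S).1 h
  rw [mem_subtreeSet_iff] at hx ⊢
  obtain ⟨hxc, hin⟩ := hx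
  exact ⟨hxc, inSub_of_child hc hadj hd hin⟩

lemma v_not_mem_child_subtree {r v ch : ↥((↑S : Set V)ᶜ)}
    (h : ch ∈ childrenOf G S r v) : (↑v : V) ∉ subtreeSet G S r ch := by
  obtain ⟨-, hd⟩ := (mem_childrenOf_iff G S).1 h
  intro hmem
  exact not_inSub_child_self hd ((coe_mem_subtreeSet G S).1 hmem)

lemma classify_core (ht : (treeOf G S).IsTree) (r v : ↥((↑S : Set V)ᶜ)) {a b : V}
    (hadj : G.Adj a b)
    (ha : a ∈ subtreeSet G S r v) (hb : b ∈ subtreeSet G S r v ∪ (↑S : Set V)) :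
    ((↑v : V) ∈ s(a, b) ∧ ∃ u ∈ s(a, b), u ∈ S) ∨
    ((↑v : V) ∈ s(a, b) ∧ ∃ ch ∈ childrenOf G S r v, (↑ch : V) ∈ s(a, b)) ∨
    (∃ ch ∈ childrenOf G S r v, (∃ x ∈ s(a, b), x ∈ subtreeSet G S r ch) ∧
      (∀ x ∈ s(a, b), x ∈ subtreeSet G S r ch ∪ (↑S : Set V))) := by
  have hc := ht.isConnected
  rw [mem_subtreeSet_iff] at ha
  obtain ⟨haC, hina⟩ := ha
  set a' : ↥((↑S : Set V)ᶜ) := ⟨a, haC⟩ with ha'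
  by_cases hav : a = ↑v
  · -- `a = v`
    rcases hb with hbD | hbS
    · -- v -- child edge
      right; left
      refine ⟨by rw [Sym2.mem_iff]; exact Or.inl hav.symm, ?_⟩
      rw [mem_subtreeSet_iff] at hbD
      obtain ⟨hbC, hinb⟩ := hbD
      set b' : ↥((↑S : Set V)ᶜ) := ⟨b, hbC⟩ with hb'
      have hadjT : (treeOf G S).Adj v b' := by
        rw [treeOf_adj]
        rw [← hav]
        exact hadj
      have hd := child_dist_of_inSub ht hadjT hinb
      exact ⟨b', (mem_childrenOf_iff G S).2 ⟨hadjT, hd⟩, by simp [hb']⟩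
    · -- boundary edge
      left
      exact ⟨by rw [Sym2.mem_iff]; exact Or.inl hav.symm, b, by simp, hbS⟩
  · -- `a ≠ v`
    have hane : a' ≠ v := fun h => hav (congrArg Subtype.val h)
    obtain ⟨ch, hchadj, hchd, hcha⟩ := inSub_step hc hina hane
    have hchmem : ch ∈ childrenOf G S r v := (mem_childrenOf_iff G S).2 ⟨hchadj, hchd⟩
    by_cases hbv : b = ↑v
    · -- `b = v`, so `a` is itself a child of `v`
      right; left
      refine ⟨by rw [Sym2.mem_iff]; exact Or.inr hbv.symm, ?_⟩
      have hadjT : (treeOf G S).Adj v a' := by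
        rw [treeOf_adj]
        rw [← hbv]
        exact hadj.symm
      have hd := child_dist_of_inSub ht hadjT hina
      exact ⟨a', (mem_childrenOf_iff G S).2 ⟨hadjT, hd⟩, by simp [ha']⟩
    · -- interior edge: both endpoints in the subtree of `ch`
      right; right
      refine ⟨ch, hchmem, ⟨a, by simp, (coe_mem_subtreeSet G S).2 hcha⟩, ?_⟩
      intro x hx
      rw [Sym2.mem_iff] at hx
      rcases hx with rfl | rfl
      · exact Or.inl ((coe_mem_subtreeSet G S).2 hcha)
      · rcases hb with hbD | hbS
        · left
          rw [mem_subtreeSet_iff] at hbD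
          obtain ⟨hbC, hinb⟩ := hbD
          set b' : ↥((↑S : Set V)ᶜ) := ⟨x, hbC⟩ with hb'
          have hbne : b' ≠ v := fun h => hbv (congrArg Subtype.val h)
          have hadjT : (treeOf G S).Adj a' b' := by
            rw [treeOf_adj]
            exact hadj
          have : InSub (treeOf G S) r ch b' := by
            rcases tree_adj_dist ht r hadjT with h | h
            · -- b' is below a'
              have h1 : InSub (treeOf G S) r a' b' := by
                unfold InSub
                rw [adj_dist_one hadjT]
                exact h
              exact inSub_trans hc hcha h1
            · -- a' is below b'
              have h1 : InSub (treeOf G S) r b' a' := by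
                unfold InSub
                rw [adj_dist_one hadjT.symm]
                exact h
              obtain ⟨ch2, hch2adj, hch2d, hch2b⟩ := inSub_step hc hinb hbne
              have h2 : InSub (treeOf G S) r ch2 a' := inSub_trans hc hch2b h1
              have : ch = ch2 := inSub_disjoint ht hchadj hchd hch2adj hch2d hcha h2
              rw [this]
              exact hch2b
          exact (coe_mem_subtreeSet G S).2 this
        · exact Or.inr hbS

end Classify


section Classify2

variable {V : Type*} [Fintype V] {k : ℕ} (G : SimpleGraph V) (S : Finset V)

lemma edge_classify (ht : (treeOf G S).IsTree) (r v : ↥((↑S : Set V)ᶜ)) (c' : V → Fin k)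
    {e : Sym2 V} (he : e ∈ G.edgeFinset) :
    (((∀ x ∈ e, ∀ y ∈ e, c' x = c' y) ∧ (∃ x ∈ e, x ∈ subtreeSet G S r v) ∧
        (∀ x ∈ e, x ∈ subtreeSet G S r v ∪ (↑S : Set V))) ↔
      (((∀ x ∈ e, ∀ y ∈ e, c' x = c' y) ∧ (↑v : V) ∈ e ∧ ∃ u ∈ e, u ∈ S) ∨
       ((∀ x ∈ e, ∀ y ∈ e, c' x = c' y) ∧ (↑v : V) ∈ e ∧
          ∃ ch ∈ childrenOf G S r v, (↑ch : V) ∈ e) ∨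
       (∃ ch ∈ childrenOf G S r v, (∀ x ∈ e, ∀ y ∈ e, c' x = c' y) ∧
          (∃ x ∈ e, x ∈ subtreeSet G S r ch) ∧
          (∀ x ∈ e, x ∈ subtreeSet G S r ch ∪ (↑S : Set V))))) ∧
    (¬((((∀ x ∈ e, ∀ y ∈ e, c' x = c' y) ∧ (↑v : V) ∈ e ∧ ∃ u ∈ e, u ∈ S)) ∧
       ((∀ x ∈ e, ∀ y ∈ e, c' x = c' y) ∧ (↑v : V) ∈ e ∧
          ∃ ch ∈ childrenOf G S r v, (↑ch : V) ∈ e))) ∧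
    (¬((((∀ x ∈ e, ∀ y ∈ e, c' x = c' y) ∧ (↑v : V) ∈ e ∧ ∃ u ∈ e, u ∈ S)) ∧
       (∃ ch ∈ childrenOf G S r v, (∀ x ∈ e, ∀ y ∈ e, c' x = c' y) ∧
          (∃ x ∈ e, x ∈ subtreeSet G S r ch) ∧
          (∀ x ∈ e, x ∈ subtreeSet G S r ch ∪ (↑S : Set V))))) ∧
    (¬(((∀ x ∈ e, ∀ y ∈ e, c' x = c' y) ∧ (↑v : V) ∈ e ∧
          ∃ ch ∈ childrenOf G S r v, (↑ch : V) ∈ e) ∧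
       (∃ ch ∈ childrenOf G S r v, (∀ x ∈ e, ∀ y ∈ e, c' x = c' y) ∧
          (∃ x ∈ e, x ∈ subtreeSet G S r ch) ∧
          (∀ x ∈ e, x ∈ subtreeSet G S r ch ∪ (↑S : Set V))))) := by
  have hc := ht.isConnected
  refine ⟨⟨?_, ?_⟩, ?_, ?_, ?_⟩
  · -- forward direction
    rintro ⟨hh, ⟨x0, hx0e, hx0⟩, hall⟩
    induction e using Sym2.ind with
    | _ a b =>
      have hadj : G.Adj a b := (SimpleGraph.mem_edgeSet G).1 (by simpa using he)
      rw [Sym2.mem_iff] at hx0e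
      rcases hx0e with rfl | rfl
      · rcases classify_core G S ht r v hadj hx0 (hall b (by simp)) with h | h | h
        · exact Or.inl ⟨hh, h.1, h.2⟩
        · exact Or.inr (Or.inl ⟨hh, h.1, h.2⟩)
        · obtain ⟨ch, hch, h1, h2⟩ := h
          exact Or.inr (Or.inr ⟨ch, hch, hh, h1, h2⟩)
      · have hadj' : G.Adj x0 a := hadj.symm
        have hswap : s(a, x0) = s(x0, a) := Sym2.eq_swap
        rcases classify_core G S ht r v hadj' hx0 (hall a (by simp)) with h | h | h
        · refine Or.inl ⟨hh, ?_, ?_⟩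
          · rw [hswap]; exact h.1
          · obtain ⟨u, hu1, hu2⟩ := h.2
            exact ⟨u, by rw [hswap]; exact hu1, hu2⟩
        · refine Or.inr (Or.inl ⟨hh, ?_, ?_⟩)
          · rw [hswap]; exact h.1
          · obtain ⟨ch, hu1, hu2⟩ := h.2
            exact ⟨ch, hu1, by rw [hswap]; exact hu2⟩
        · obtain ⟨ch, hch, ⟨x, hx1, hx2⟩, h2⟩ := h
          refine Or.inr (Or.inr ⟨ch, hch, hh, ⟨x, by rw [hswap]; exact hx1, hx2⟩, ?_⟩)
          intro y hy
          exact h2 y (by rw [← hswap]; exact hy)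
  · -- backward direction
    rintro (⟨hh, hv, u, hue, huS⟩ | ⟨hh, hv, ch, hch, hche⟩ | ⟨ch, hch, hh, hex, hall⟩)
    · have hune : u ≠ (↑v : V) := fun h => coe_ne_S S (h ▸ huS)
      have heq : e = s(u, ↑v) := Sym2.eq_of_ne_mem hune hue hv (by simp) (by simp)
      refine ⟨hh, ⟨↑v, hv, (coe_mem_subtreeSet G S).2 (inSub_self r v)⟩, ?_⟩
      intro x hx
      rw [heq, Sym2.mem_iff] at hx
      rcases hx with rfl | rfl
      · exact Or.inr (Finset.mem_coe.2 huS)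
      · exact Or.inl ((coe_mem_subtreeSet G S).2 (inSub_self r v))
    · have hchne : (↑ch : V) ≠ (↑v : V) := by
        intro h
        exact (treeOf G S).irrefl (Subtype.ext h ▸ ((mem_childrenOf_iff G S).1 hch).1)
      have heq : e = s(↑ch, ↑v) := Sym2.eq_of_ne_mem hchne hche hv (by simp) (by simp)
      refine ⟨hh, ⟨↑v, hv, (coe_mem_subtreeSet G S).2 (inSub_self r v)⟩, ?_⟩
      intro x hx
      rw [heq, Sym2.mem_iff] at hx
      rcases hx with rfl | rfl
      · exact Or.inl (child_mem_subtree G S hch)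
      · exact Or.inl ((coe_mem_subtreeSet G S).2 (inSub_self r v))
    · obtain ⟨x, hx1, hx2⟩ := hex
      refine ⟨hh, ⟨x, hx1, subtree_mono G S hc hch hx2⟩, ?_⟩
      intro y hy
      rcases hall y hy with h | h
      · exact Or.inl (subtree_mono G S hc hch h)
      · exact Or.inr h
  · -- ¬(Pb ∧ Pc)
    rintro ⟨⟨-, hv, u, hue, huS⟩, ⟨-, -, ch, hch, hche⟩⟩
    have hune : u ≠ (↑v : V) := fun h => coe_ne_S S (h ▸ huS)
    have heq : e = s(u, ↑v) := Sym2.eq_of_ne_mem hune hue hv (by simp) (by simp)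
    rw [heq, Sym2.mem_iff] at hche
    rcases hche with h | h
    · exact coe_ne_S S (h ▸ huS)
    · exact (treeOf G S).irrefl (Subtype.ext h ▸ ((mem_childrenOf_iff G S).1 hch).1)
  · -- ¬(Pb ∧ Pch)
    rintro ⟨⟨-, hv, u, hue, huS⟩, ⟨ch, hch, -, ⟨x, hxe, hxD⟩, -⟩⟩
    have hune : u ≠ (↑v : V) := fun h => coe_ne_S S (h ▸ huS)
    have heq : e = s(u, ↑v) := Sym2.eq_of_ne_mem hune hue hv (by simp) (by simp)
    rw [heq, Sym2.mem_iff] at hxe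
    rcases hxe with rfl | rfl
    · exact not_mem_S_of_mem_subtreeSet G S hxD huS
    · exact v_not_mem_child_subtree G S hch hxD
  · -- ¬(Pc ∧ Pch)
    rintro ⟨⟨-, hv, ch1, hch1, hch1e⟩, ⟨ch, hch, -, ⟨x, hxe, hxD⟩, hall⟩⟩
    have hch1ne : (↑ch1 : V) ≠ (↑v : V) := by
      intro h
      exact (treeOf G S).irrefl (Subtype.ext h ▸ ((mem_childrenOf_iff G S).1 hch1).1)
    have heq : e = s(↑ch1, ↑v) := Sym2.eq_of_ne_mem hch1ne hch1e hv (by simp) (by simp)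
    rw [heq, Sym2.mem_iff] at hxe
    have hcheq : ch = ch1 := by
      rcases hxe with rfl | rfl
      · -- x = ch1 : ch1 lies in subtree of ch
        have h1 := (coe_mem_subtreeSet G S).1 hxD
        obtain ⟨ha1, hd1⟩ := (mem_childrenOf_iff G S).1 hch
        obtain ⟨ha2, hd2⟩ := (mem_childrenOf_iff G S).1 hch1
        exact inSub_disjoint ht ha1 hd1 ha2 hd2 h1 (inSub_self r ch1)
      · exact absurd hxD (v_not_mem_child_subtree G S hch)
    subst hcheq
    have := hall (↑v) (by rw [heq]; simp)
    rcases this with h | h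
    · exact v_not_mem_child_subtree G S hch h
    · exact coe_ne_S S (Finset.mem_coe.1 h)

end Classify2


section Decomp

variable {V : Type*} [Fintype V] {k : ℕ} (G : SimpleGraph V) (w : Sym2 V → ℕ) (S : Finset V)

lemma Fsum_decomp (ht : (treeOf G S).IsTree) (r v : ↥((↑S : Set V)ᶜ)) (c' : V → Fin k) :
    Fsum G w S r v c' =
      (∑ u ∈ Finset.univ.filter (fun u => G.Adj ↑v u ∧ u ∈ S ∧ c' u = c' ↑v), w s(↑v, u))
      + (∑ ch ∈ (childrenOf G S r v).filter
            (fun ch : ↥((↑S : Set V)ᶜ) => c' ↑ch = c' ↑v), w s(↑v, ↑ch))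
      + ∑ ch ∈ childrenOf G S r v, Fsum G w S r ch c' := by
  have hB : (∑ u ∈ Finset.univ.filter (fun u => G.Adj ↑v u ∧ u ∈ S ∧ c' u = c' ↑v),
      w s(↑v, u)) = ∑ e ∈ G.edgeFinset.filter (fun e =>
        (∀ x ∈ e, ∀ y ∈ e, c' x = c' y) ∧ (↑v : V) ∈ e ∧ ∃ u ∈ e, u ∈ S), w e := by
    rw [boundary_filter_eq G S r v c']
    rw [Finset.sum_image]
    intro u hu u' hu' heq
    exact Sym2.congr_right.1 heq
  have hC : (∑ ch ∈ (childrenOf G S r v).filter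
        (fun ch : ↥((↑S : Set V)ᶜ) => c' ↑ch = c' ↑v), w s(↑v, ↑ch))
      = ∑ e ∈ G.edgeFinset.filter (fun e =>
        (∀ x ∈ e, ∀ y ∈ e, c' x = c' y) ∧ (↑v : V) ∈ e ∧
          ∃ ch ∈ childrenOf G S r v, (↑ch : V) ∈ e), w e := by
    rw [childedge_filter_eq G S r v c']
    rw [Finset.sum_image]
    intro u hu u' hu' heq
    exact Subtype.ext (Sym2.congr_right.1 heq)
  have hD : (∑ ch ∈ childrenOf G S r v, Fsum G w S r ch c')
      = ∑ e ∈ G.edgeFinset, (if ∃ ch ∈ childrenOf G S r v,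
          ((∀ x ∈ e, ∀ y ∈ e, c' x = c' y) ∧
           (∃ x ∈ e, x ∈ subtreeSet G S r ch) ∧
           (∀ x ∈ e, x ∈ subtreeSet G S r ch ∪ (↑S : Set V))) then w e else 0) := by
    unfold Fsum
    simp_rw [Finset.sum_filter]
    rw [Finset.sum_comm]
    apply Finset.sum_congr rfl
    intro e he
    apply sum_ite_unique
    rintro ch hch ch' hch' ⟨-, ⟨x, hxe, hxD⟩, -⟩ ⟨-, -, hall'⟩
    have hx' : x ∈ subtreeSet G S r ch' := by
      rcases hall' x hxe with h | h
      · exact h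
      · exact absurd (Finset.mem_coe.1 h) (not_mem_S_of_mem_subtreeSet G S hxD)
    obtain ⟨ha1, hd1⟩ := (mem_childrenOf_iff G S).1 hch
    obtain ⟨ha2, hd2⟩ := (mem_childrenOf_iff G S).1 hch'
    obtain ⟨hxC, hin1⟩ := (mem_subtreeSet_iff G S).1 hxD
    obtain ⟨hxC', hin2⟩ := (mem_subtreeSet_iff G S).1 hx'
    have hin2' : InSub (treeOf G S) r ch' ⟨x, hxC⟩ := hin2
    exact inSub_disjoint ht ha1 hd1 ha2 hd2 hin1 hin2' 
  rw [hB, hC, hD]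
  unfold Fsum
  rw [Finset.sum_filter, Finset.sum_filter, Finset.sum_filter]
  rw [← Finset.sum_add_distrib, ← Finset.sum_add_distrib]
  apply Finset.sum_congr rfl
  intro e he
  obtain ⟨hiff, h1, h2, h3⟩ := edge_classify G S ht r v c' he
  exact ite_add_ite_add_ite hiff h1 h2 h3 (w e)

end Decomp


section Opt

variable {V : Type*} [Fintype V] {k : ℕ} (G : SimpleGraph V) (w : Sym2 V → ℕ)
  (S : Finset V) (c : V → Fin k)

noncomputable def Mval' (r v : ↥((↑S : Set V)ᶜ)) (i : Fin k) : ℕ :=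
  sSup {m : ℕ | ∃ c' : V → Fin k, c' ↑v = i ∧ (∀ x ∈ S, c' x = c x) ∧
    m = Fsum G w S r v c'}

lemma Fsum_le_total (r v : ↥((↑S : Set V)ᶜ)) (c' : V → Fin k) :
    Fsum G w S r v c' ≤ ∑ e ∈ G.edgeFinset, w e :=
  Finset.sum_le_sum_of_subset (Finset.filter_subset _ _)

lemma MvalSet_nonempty (r v : ↥((↑S : Set V)ᶜ)) (i : Fin k) :
    {m : ℕ | ∃ c' : V → Fin k, c' ↑v = i ∧ (∀ x ∈ S, c' x = c x) ∧
      m = Fsum G w S r v c'}.Nonempty := by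
  refine ⟨_, fun x => if x ∈ S then c x else i, ?_, ?_, rfl⟩
  · simp [coe_ne_S S (v := v)]
  · intro x hx
    simp [hx]

lemma MvalSet_bdd (r v : ↥((↑S : Set V)ᶜ)) (i : Fin k) :
    BddAbove {m : ℕ | ∃ c' : V → Fin k, c' ↑v = i ∧ (∀ x ∈ S, c' x = c x) ∧
      m = Fsum G w S r v c'} := by
  refine ⟨∑ e ∈ G.edgeFinset, w e, ?_⟩
  rintro m ⟨c', -, -, rfl⟩
  exact Fsum_le_total G w S r v c'

lemma Mval'_spec (r v : ↥((↑S : Set V)ᶜ)) (i : Fin k) :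
    ∃ c' : V → Fin k, c' ↑v = i ∧ (∀ x ∈ S, c' x = c x) ∧
      Mval' G w S c r v i = Fsum G w S r v c' :=
  Nat.sSup_mem (MvalSet_nonempty G w S c r v i) (MvalSet_bdd G w S c r v i)

lemma Fsum_le_Mval' (r v : ↥((↑S : Set V)ᶜ)) (i : Fin k) {c' : V → Fin k}
    (h1 : c' ↑v = i) (h2 : ∀ x ∈ S, c' x = c x) :
    Fsum G w S r v c' ≤ Mval' G w S c r v i :=
  le_csSup (MvalSet_bdd G w S c r v i) ⟨c', h1, h2, rfl⟩

lemma Mval'_le (r v : ↥((↑S : Set V)ᶜ)) (i : Fin k) {b : ℕ}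
    (h : ∀ c' : V → Fin k, c' ↑v = i → (∀ x ∈ S, c' x = c x) →
      Fsum G w S r v c' ≤ b) :
    Mval' G w S c r v i ≤ b := by
  apply csSup_le (MvalSet_nonempty G w S c r v i)
  rintro m ⟨c', h1, h2, rfl⟩
  exact h c' h1 h2

lemma boundary_filter_congr (v : ↥((↑S : Set V)ᶜ)) (i : Fin k) {c' : V → Fin k}
    (h1 : c' ↑v = i) (h2 : ∀ x ∈ S, c' x = c x) :
    Finset.univ.filter (fun u => G.Adj ↑v u ∧ u ∈ S ∧ c' u = c' ↑v)
      = Finset.univ.filter (fun u => G.Adj ↑v u ∧ u ∈ S ∧ c u = i) := by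
  apply Finset.filter_congr
  intro u hu
  constructor
  · rintro ⟨ha, hS, hc⟩
    exact ⟨ha, hS, by rw [← h2 u hS, hc, h1]⟩
  · rintro ⟨ha, hS, hc⟩
    exact ⟨ha, hS, by rw [h2 u hS, hc, h1]⟩

/-- Statement (1): leaves. -/
lemma Mval'_leaf (ht : (treeOf G S).IsTree) (r v : ↥((↑S : Set V)ᶜ)) (i : Fin k)
    (hleaf : childrenOf G S r v = ∅) :
    Mval' G w S c r v i =
      ∑ u ∈ Finset.univ.filter (fun u => G.Adj ↑v u ∧ u ∈ S ∧ c u = i), w s(↑v, u) := by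
  apply le_antisymm
  · apply Mval'_le
    intro c' h1 h2
    rw [Fsum_decomp G w S ht r v c', hleaf]
    simp only [Finset.filter_empty, Finset.sum_empty, add_zero]
    rw [boundary_filter_congr G S c v i h1 h2]
  · obtain ⟨c', h1, h2, hEq⟩ := Mval'_spec G w S c r v i
    rw [hEq, Fsum_decomp G w S ht r v c', hleaf]
    simp only [Finset.filter_empty, Finset.sum_empty, add_zero]
    rw [boundary_filter_congr G S c v i h1 h2]

/-- Statement (2), upper bound. -/
lemma Mval'_node_le (ht : (treeOf G S).IsTree) (r v : ↥((↑S : Set V)ᶜ)) (i : Fin k)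
    (hk : 2 ≤ k) :
    Mval' G w S c r v i ≤
      (∑ u ∈ Finset.univ.filter (fun u => G.Adj ↑v u ∧ u ∈ S ∧ c u = i), w s(↑v, u)) +
      ∑ u ∈ childrenOf G S r v,
        max (w s(↑v, ↑u) + Mval' G w S c r u i)
          ((Finset.univ.filter (fun i' : Fin k => i' ≠ i)).sup (Mval' G w S c r u)) := by
  apply Mval'_le
  intro c' h1 h2
  rw [Fsum_decomp G w S ht r v c', boundary_filter_congr G S c v i h1 h2]
  rw [add_assoc]
  apply Nat.add_le_add_left
  rw [Finset.sum_filter, ← Finset.sum_add_distrib]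
  apply Finset.sum_le_sum
  intro ch hch
  have hFle : Fsum G w S r ch c' ≤ Mval' G w S c r ch (c' ↑ch) :=
    Fsum_le_Mval' G w S c r ch (c' ↑ch) rfl h2
  by_cases hcc : c' ↑ch = i
  · rw [if_pos (by rw [hcc, h1])]
    calc w s(↑v, ↑ch) + Fsum G w S r ch c'
        ≤ w s(↑v, ↑ch) + Mval' G w S c r ch i := by
          rw [← hcc]; exact Nat.add_le_add_left hFle _
      _ ≤ _ := le_max_left _ _
  · rw [if_neg (by rw [h1]; exact hcc)]
    calc 0 + Fsum G w S r ch c' = Fsum G w S r ch c' := by ring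
      _ ≤ Mval' G w S c r ch (c' ↑ch) := hFle
      _ ≤ (Finset.univ.filter (fun i' : Fin k => i' ≠ i)).sup (Mval' G w S c r ch) :=
          Finset.le_sup (by simp [hcc])
      _ ≤ _ := le_max_right _ _

end Opt


section Glue

variable {V : Type*} [Fintype V] {k : ℕ} (G : SimpleGraph V) (w : Sym2 V → ℕ)
  (S : Finset V) (c : V → Fin k)

/-- Statement (2), lower bound. -/
lemma Mval'_node_ge (ht : (treeOf G S).IsTree) (r v : ↥((↑S : Set V)ᶜ)) (i : Fin k)
    (hk : 2 ≤ k) :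
    (∑ u ∈ Finset.univ.filter (fun u => G.Adj ↑v u ∧ u ∈ S ∧ c u = i), w s(↑v, u)) +
      ∑ u ∈ childrenOf G S r v,
        max (w s(↑v, ↑u) + Mval' G w S c r u i)
          ((Finset.univ.filter (fun i' : Fin k => i' ≠ i)).sup (Mval' G w S c r u))
      ≤ Mval' G w S c r v i := by
  classical
  set R := childrenOf G S r v with hR
  -- for each child pick an optimal coloring realizing the max
  have key : ∀ ch : ↥((↑S : Set V)ᶜ), ch ∈ R → ∃ wc : V → Fin k,
      (∀ x ∈ S, wc x = c x) ∧
      ((if wc ↑ch = i then w s(↑v, ↑ch) else 0) + Fsum G w S r ch wc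
        = max (w s(↑v, ↑ch) + Mval' G w S c r ch i)
            ((Finset.univ.filter (fun i' : Fin k => i' ≠ i)).sup (Mval' G w S c r ch))) := by
    intro ch hch
    set Wsup := (Finset.univ.filter (fun i' : Fin k => i' ≠ i)).sup (Mval' G w S c r ch)
      with hWsup
    by_cases hcase : Wsup ≤ w s(↑v, ↑ch) + Mval' G w S c r ch i
    · obtain ⟨c1, e1, e2, e3⟩ := Mval'_spec G w S c r ch i
      refine ⟨c1, e2, ?_⟩
      rw [if_pos e1, ← e3, max_eq_left hcase]
    · have hex : ∃ j : Fin k, j ≠ i := by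
        obtain ⟨j, -, hj⟩ := Finset.exists_mem_ne
          (by simpa using (show 1 < k by omega) : 1 < (Finset.univ : Finset (Fin k)).card) i
        exact ⟨j, hj⟩
      obtain ⟨j0, hj0⟩ := hex
      have hne : ((Finset.univ.filter (fun i' : Fin k => i' ≠ i))).Nonempty :=
        ⟨j0, by simp [hj0]⟩
      obtain ⟨j, hjmem, hjval⟩ := Finset.exists_mem_eq_sup _ hne (Mval' G w S c r ch)
      have hji : j ≠ i := by simpa using hjmem
      obtain ⟨c1, e1, e2, e3⟩ := Mval'_spec G w S c r ch j
      refine ⟨c1, e2, ?_⟩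
      rw [if_neg (by rw [e1]; exact hji), max_eq_right (le_of_not_ge hcase), hWsup,
        hjval, ← e3, Nat.zero_add]
  choose wc hwc1 hwc2 using key
  -- glue the child colorings together
  set glue : V → Fin k := fun x =>
    if h : ∃ ch ∈ R, x ∈ subtreeSet G S r ch then wc h.choose h.choose_spec.1 x
    else if x = ↑v then i else c x with hglue
  have glue_sub : ∀ ch (hch : ch ∈ R), ∀ x ∈ subtreeSet G S r ch,
      glue x = wc ch hch x := by
    intro ch hch x hx
    have h : ∃ ch' ∈ R, x ∈ subtreeSet G S r ch' := ⟨ch, hch, hx⟩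
    have hcheq : h.choose = ch := by
      obtain ⟨hm, hx'⟩ := h.choose_spec
      obtain ⟨ha1, hd1⟩ := (mem_childrenOf_iff G S).1 hm
      obtain ⟨ha2, hd2⟩ := (mem_childrenOf_iff G S).1 hch
      obtain ⟨hxC, hin1⟩ := (mem_subtreeSet_iff G S).1 hx'
      obtain ⟨hxC', hin2⟩ := (mem_subtreeSet_iff G S).1 hx
      have hin2' : InSub (treeOf G S) r ch ⟨x, hxC⟩ := hin2
      exact inSub_disjoint ht ha1 hd1 ha2 hd2 hin1 hin2'
    rw [hglue]
    simp only [dif_pos h]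
    congr 1
  have glue_S : ∀ x ∈ S, glue x = c x := by
    intro x hx
    have h1 : ¬ ∃ ch ∈ R, x ∈ subtreeSet G S r ch := by
      rintro ⟨ch, -, hmem⟩
      exact not_mem_S_of_mem_subtreeSet G S hmem hx
    have h2 : x ≠ ↑v := fun h => coe_ne_S S (h ▸ hx)
    rw [hglue]
    simp only [dif_neg h1, if_neg h2]
  have glue_v : glue ↑v = i := by
    have h1 : ¬ ∃ ch ∈ R, (↑v : V) ∈ subtreeSet G S r ch := by
      rintro ⟨ch, hch, hmem⟩
      exact v_not_mem_child_subtree G S hch hmem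
    simp only [hglue]
    rw [dif_neg h1]
    simp
  -- evaluate
  have hval : Fsum G w S r v glue =
      (∑ u ∈ Finset.univ.filter (fun u => G.Adj ↑v u ∧ u ∈ S ∧ c u = i), w s(↑v, u)) +
      ∑ u ∈ R, max (w s(↑v, ↑u) + Mval' G w S c r u i)
          ((Finset.univ.filter (fun i' : Fin k => i' ≠ i)).sup (Mval' G w S c r u)) := by
    rw [Fsum_decomp G w S ht r v glue, boundary_filter_congr G S c v i glue_v glue_S,
      add_assoc]
    congr 1
    rw [Finset.sum_filter, ← Finset.sum_add_distrib]
    apply Finset.sum_congr rfl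
    intro ch hch
    have e1 : glue ↑ch = wc ch hch ↑ch :=
      glue_sub ch hch ↑ch ((coe_mem_subtreeSet G S).2 (inSub_self r ch))
    have e2 : Fsum G w S r ch glue = Fsum G w S r ch (wc ch hch) := by
      apply Fsum_congr
      intro x hx
      rcases hx with hx | hx
      · exact glue_sub ch hch x hx
      · rw [glue_S x (Finset.mem_coe.1 hx), hwc1 ch hch x (Finset.mem_coe.1 hx)]
    rw [e2, ← hwc2 ch hch]
    congr 1
    rw [e1, glue_v]
  rw [← hval]
  exact Fsum_le_Mval' G w S c r v i glue_v glue_S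

end Glue


section Root

variable {V : Type*} [Fintype V] {k : ℕ} (G : SimpleGraph V) (w : Sym2 V → ℕ)
  (S : Finset V) (c : V → Fin k)

lemma ite_add_ite {P A B : Prop} [Decidable P] [Decidable A] [Decidable B]
    (h : P ↔ A ∨ B) (hAB : ¬(A ∧ B)) (m : ℕ) :
    (if P then m else 0) = (if A then m else 0) + (if B then m else 0) := by
  by_cases hA : A <;> by_cases hB : B <;> simp_all

lemma mem_subtree_root (r : ↥((↑S : Set V)ᶜ)) {x : V} (hx : x ∉ S) :
    x ∈ subtreeSet G S r r := by
  have hxC : x ∈ ((↑S : Set V)ᶜ) := by simpa using hx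
  exact (mem_subtreeSet_iff G S).2 ⟨hxC, inSub_root r ⟨x, hxC⟩⟩

/-- Global decomposition of happy edge weight at the root. -/
lemma happy_decomp (r : ↥((↑S : Set V)ᶜ)) (c' : V → Fin k) :
    happyEdgeWeight G w c' =
      (∑ e ∈ G.edgeFinset.filter
          (fun e => (∀ x ∈ e, x ∈ S) ∧ ∀ x ∈ e, ∀ y ∈ e, c' x = c' y), w e) +
      Fsum G w S r r c' := by
  unfold happyEdgeWeight Fsum
  rw [Finset.sum_filter, Finset.sum_filter, Finset.sum_filter, ← Finset.sum_add_distrib]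
  apply Finset.sum_congr rfl
  intro e he
  apply ite_add_ite
  · constructor
    · intro hh
      by_cases hall : ∀ x ∈ e, x ∈ S
      · exact Or.inl ⟨hall, hh⟩
      · push_neg at hall
        obtain ⟨x, hxe, hxS⟩ := hall
        refine Or.inr ⟨hh, ⟨x, hxe, mem_subtree_root G S r hxS⟩, ?_⟩
        intro y hy
        by_cases hyS : y ∈ S
        · exact Or.inr (Finset.mem_coe.2 hyS)
        · exact Or.inl (mem_subtree_root G S r hyS)
    · rintro (⟨-, hh⟩ | ⟨hh, -, -⟩) <;> exact hh
  · rintro ⟨⟨hall, -⟩, ⟨-, ⟨x, hxe, hxD⟩, -⟩⟩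
    exact not_mem_S_of_mem_subtreeSet G S hxD (hall x hxe)

lemma happyS_congr {c' : V → Fin k} (h : ∀ x ∈ S, c' x = c x) :
    G.edgeFinset.filter (fun e => (∀ x ∈ e, x ∈ S) ∧ ∀ x ∈ e, ∀ y ∈ e, c' x = c' y)
      = G.edgeFinset.filter
          (fun e => (∀ x ∈ e, x ∈ S) ∧ ∀ x ∈ e, ∀ y ∈ e, c x = c y) := by
  apply Finset.filter_congr
  intro e he
  constructor
  · rintro ⟨hall, hh⟩
    refine ⟨hall, fun x hx y hy => ?_⟩
    rw [← h x (hall x hx), ← h y (hall y hy)]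
    exact hh x hx y hy
  · rintro ⟨hall, hh⟩
    refine ⟨hall, fun x hx y hy => ?_⟩
    rw [h x (hall x hx), h y (hall y hy)]
    exact hh x hx y hy

/-- Statement (3). -/
lemma global_opt (ht : (treeOf G S).IsTree) (r : ↥((↑S : Set V)ᶜ)) (hk : 2 ≤ k) :
    sSup {m : ℕ | ∃ c' : V → Fin k, (∀ x ∈ S, c' x = c x) ∧ m = happyEdgeWeight G w c'} =
      (∑ e ∈ G.edgeFinset.filter
          (fun e => (∀ x ∈ e, x ∈ S) ∧ ∀ x ∈ e, ∀ y ∈ e, c x = c y), w e) +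
        (Finset.univ : Finset (Fin k)).sup (Mval' G w S c r r) := by
  have hWp := fun (c' : V → Fin k) (h : ∀ x ∈ S, c' x = c x) => happyS_congr G S c h
  apply le_antisymm
  · apply csSup_le
    · exact ⟨happyEdgeWeight G w (fun x => if x ∈ S then c x else ⟨0, by omega⟩),
        fun x => if x ∈ S then c x else (⟨0, by omega⟩ : Fin k),
        fun x hx => by simp [hx], rfl⟩
    · rintro m ⟨c', hag, rfl⟩
      rw [happy_decomp G w S r c', hWp c' hag]
      apply Nat.add_le_add_left
      calc Fsum G w S r r c' ≤ Mval' G w S c r r (c' ↑r) :=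
            Fsum_le_Mval' G w S c r r (c' ↑r) rfl hag
        _ ≤ _ := Finset.le_sup (Finset.mem_univ _)
  · have hne : (Finset.univ : Finset (Fin k)).Nonempty := by
      have : 0 < k := by omega
      exact ⟨⟨0, this⟩, Finset.mem_univ _⟩
    obtain ⟨i0, -, hi0⟩ := Finset.exists_mem_eq_sup _ hne (Mval' G w S c r r)
    obtain ⟨c1, e1, e2, e3⟩ := Mval'_spec G w S c r r i0
    apply le_csSup
    · refine ⟨∑ e ∈ G.edgeFinset, w e + ∑ e ∈ G.edgeFinset, w e, ?_⟩
      rintro m ⟨c', -, rfl⟩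
      have h1 : happyEdgeWeight G w c' ≤ ∑ e ∈ G.edgeFinset, w e :=
        Finset.sum_le_sum_of_subset (Finset.filter_subset _ _)
      omega
    · refine ⟨c1, e2, ?_⟩
      rw [happy_decomp G w S r c1, hWp c1 e2, hi0, e3]

end Root

end StmtAux

/-- Let `k ≥ 2`, let `G` be edge-weighted with partial coloring
`c : S → [k]`, and suppose the subgraph induced on `V ∖ S` is a tree `T`, rooted at
`r ∈ V ∖ S`.  Then:
(1) for every leaf `v` of `T` (a vertex with no children) and every color `i`,
    `M_v(i)` is the total weight of the edges from `v` to its neighbors in `S` of color `i`;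
(2) for every vertex `v` with children and every color `i`, `M_v(i)` equals that total weight
    plus `∑_{u child of v} max (w(vu) + M_u(i)) (max_{i' ≠ i} M_u(i'))`;
(3) the maximum over all extensions of `c` of the total weight of the happy edges of `G`
    equals `W_p + max_i M_r(i)`, where `W_p` is the total weight of the happy edges with both
    endpoints in `S`. -/
theorem stmt10 {V : Type*} [Fintype V] (k : ℕ) (hk : 2 ≤ k)
    (G : SimpleGraph V) (w : Sym2 V → ℕ) (S : Finset V) (c : V → Fin k)
    (htree : (treeOf G S).IsTree) (r : ↥((↑S : Set V)ᶜ)) :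
    (∀ (v : ↥((↑S : Set V)ᶜ)) (i : Fin k), childrenOf G S r v = ∅ →
      Mval G w S c r v i =
        ∑ u ∈ Finset.univ.filter (fun u => G.Adj ↑v u ∧ u ∈ S ∧ c u = i), w s(↑v, u)) ∧
    (∀ (v : ↥((↑S : Set V)ᶜ)) (i : Fin k), (childrenOf G S r v).Nonempty →
      Mval G w S c r v i =
        (∑ u ∈ Finset.univ.filter (fun u => G.Adj ↑v u ∧ u ∈ S ∧ c u = i), w s(↑v, u)) +
        ∑ u ∈ childrenOf G S r v,
          max (w s(↑v, ↑u) + Mval G w S c r u i)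
            ((Finset.univ.filter (fun i' : Fin k => i' ≠ i)).sup (Mval G w S c r u))) ∧
    sSup {m : ℕ | ∃ c' : V → Fin k, (∀ x ∈ S, c' x = c x) ∧ m = happyEdgeWeight G w c'} =
      (∑ e ∈ G.edgeFinset.filter
          (fun e => (∀ x ∈ e, x ∈ S) ∧ ∀ x ∈ e, ∀ y ∈ e, c x = c y), w e) +
        (Finset.univ : Finset (Fin k)).sup (Mval G w S c r r) := by
  have hMval : Mval G w S c r = StmtAux.Mval' G w S c r := rfl
  refine ⟨?_, ?_, ?_⟩
  · intro v i hleaf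
    rw [hMval]
    exact StmtAux.Mval'_leaf G w S c htree r v i hleaf
  · intro v i hne
    simp only [hMval]
    exact le_antisymm (StmtAux.Mval'_node_le G w S c htree r v i hk)
      (StmtAux.Mval'_node_ge G w S c htree r v i hk)
  · simp only [hMval]
    exact StmtAux.global_opt G w S c htree r hk
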